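/- Let D be a Dedekind domain, G finite Abelian, A = D ◊_{σ,α} G crystalline graded, W = Ker σ, and B = D ◊_{σ,α} W the subring graded by W. Then Z(A) ⊆ Z(B), and Z(B) = Σ_{s ∈ W_reg} D u_s where W_reg = {s ∈ W : α(s,x) = α(x,s) for all x ∈ W}. -/

import Mathlib

/-- A crystalline graded ring `A = D ◊_{σ,α} G` over a commutative domain `D`:
`D` embeds in `A` via `ι`, `u : G → A` with `u_e = 1`, the automorphisms
`σ : G → Aut(D)` form a group morphism (as `D` is commutative, `σ_{gh} = σ_g σ_h`),
`α : G × G → D \ {0}` satisfies `u_g r = σ_g(r) u_g`, `u_g u_h = α(g,h) u_{gh}`,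
`α(g,e) = α(e,g) = 1` and the 2-cocycle relation, and `A = ⊕_g D u_g` (the
`basis` field).  The kernel of the twist is `W = {g : σ_g = 1}`. -/
structure CrysDom (G D A : Type*) [Group G] [CommRing D] [IsDomain D] [Ring A] where
  ι : D →+* A
  inj : Function.Injective ι
  u : G → A
  σ : G →* RingAut D
  α : G → G → D
  α_ne_zero : ∀ g h : G, α g h ≠ 0
  u_one : u 1 = 1
  comm : ∀ (g : G) (r : D), u g * ι r = ι (σ g r) * u g
  mul_u : ∀ g h : G, u g * u h = ι (α g h) * u (g * h)
  α_one_left : ∀ g : G, α 1 g = 1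
  α_one_right : ∀ g : G, α g 1 = 1
  cocycle : ∀ g h t : G, α g h * α (g * h) t = σ g (α h t) * α g (h * t)
  basis : Function.Bijective (fun f : G →₀ D => f.sum fun g r => ι r * u g)

/-- The subring `B = D ◊_{σ,α} W` of `A` graded by `W = Ker σ`: the subring
generated by the homogeneous components `D u_w`, `w ∈ W`. -/
def CrysDom.kernelPart {G D A : Type*} [Group G] [CommRing D] [IsDomain D] [Ring A]
    (P : CrysDom G D A) : Subring A :=
  Subring.closure {a : A | ∃ (d : D) (w : G), P.σ w = 1 ∧ a = P.ι d * P.u w}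

namespace CrysDom

open scoped Classical

set_option linter.unusedSectionVars false

variable {G D A : Type*} [CommGroup G] [Fintype G] [CommRing D] [IsDomain D] [Ring A]
  (P : CrysDom G D A)

lemma ringAut_one_apply (r : D) : (1 : RingAut D) r = r := rfl

lemma coe_symm_eq (c : G → D) : ⇑(Finsupp.equivFunOnFinite.symm c) = c :=
  Finsupp.equivFunOnFinite.apply_symm_apply c

/-- The element of `A` with coefficient function `c : G → D`. -/
def F (c : G → D) : A := ∑ g, P.ι (c g) * P.u g

lemma finsuppSum_eq (f : G →₀ D) : (f.sum fun g r => P.ι r * P.u g) = P.F ⇑f := by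
  rw [Finsupp.sum_fintype _ _ (fun g => by simp)]; rfl

lemma F_injective : Function.Injective P.F := by
  intro c c' h
  have h2 : Finsupp.equivFunOnFinite.symm c = Finsupp.equivFunOnFinite.symm c' := by
    apply P.basis.1
    simp only [P.finsuppSum_eq, coe_symm_eq]
    exact h
  calc c = ⇑(Finsupp.equivFunOnFinite.symm c) := (coe_symm_eq c).symm
    _ = ⇑(Finsupp.equivFunOnFinite.symm c') := by rw [h2]
    _ = c' := coe_symm_eq c'

lemma F_surjective : Function.Surjective P.F := by
  intro a
  obtain ⟨f, hf⟩ := P.basis.2 a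
  exact ⟨⇑f, by rw [← hf]; exact (P.finsuppSum_eq f).symm⟩

lemma F_add (c c' : G → D) : P.F (c + c') = P.F c + P.F c' := by
  simp [F, add_mul, Finset.sum_add_distrib]

lemma F_neg (c : G → D) : P.F (-c) = -P.F c := by
  simp [F, neg_mul, ← Finset.sum_neg_distrib]

lemma F_zero : P.F 0 = 0 := by simp [F]

lemma F_sum {ι : Type*} (s : Finset ι) (c : ι → G → D) :
    P.F (fun h => ∑ i ∈ s, c i h) = ∑ i ∈ s, P.F (c i) := by
  simp only [F, map_sum, Finset.sum_mul]
  exact Finset.sum_comm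

lemma F_single (d : D) (w : G) : P.F (fun h => if h = w then d else 0) = P.ι d * P.u w := by
  rw [F, Finset.sum_eq_single w]
  · simp
  · intro g _ hg; simp [hg]
  · simp

lemma u_mul_iota_mul_u (x g : G) (e : D) :
    P.u x * (P.ι e * P.u g) = P.ι (P.σ x e * P.α x g) * P.u (x * g) := by
  rw [← mul_assoc, P.comm, mul_assoc, P.mul_u, ← mul_assoc, ← map_mul]

lemma gen_mul_F (d : D) (x : G) (c : G → D) :
    (P.ι d * P.u x) * P.F c
      = P.F fun h => d * P.σ x (c (x⁻¹ * h)) * P.α x (x⁻¹ * h) := by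
  rw [F, Finset.mul_sum, F]
  refine Fintype.sum_equiv (Equiv.mulLeft x) _ _ fun g => ?_
  simp only [Equiv.coe_mulLeft, inv_mul_cancel_left]
  rw [mul_assoc, P.u_mul_iota_mul_u, ← mul_assoc, ← map_mul]
  congr 2
  ring

lemma F_mul_gen (d : D) (x : G) (c : G → D) :
    P.F c * (P.ι d * P.u x)
      = P.F fun h => c (h * x⁻¹) * P.σ (h * x⁻¹) d * P.α (h * x⁻¹) x := by
  rw [F, Finset.sum_mul, F]
  refine Fintype.sum_equiv (Equiv.mulRight x) _ _ fun g => ?_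
  simp only [Equiv.coe_mulRight, mul_inv_cancel_right]
  rw [mul_assoc, P.u_mul_iota_mul_u, ← mul_assoc, ← map_mul]
  congr 2
  ring

lemma F_mul_iota (r : D) (c : G → D) :
    P.F c * P.ι r = P.F fun g => c g * P.σ g r := by
  have h : P.ι r = P.ι r * P.u 1 := by rw [P.u_one, mul_one]
  rw [h, P.F_mul_gen]
  congr 1; funext g
  simp [P.α_one_right]

lemma iota_mul_F (r : D) (c : G → D) :
    P.ι r * P.F c = P.F fun g => r * c g := by
  have h : P.ι r = P.ι r * P.u 1 := by rw [P.u_one, mul_one]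
  rw [h, P.gen_mul_F]
  congr 1; funext g
  simp [P.α_one_left, map_one P.σ, ringAut_one_apply]

lemma mem_kernelPart_iff {a : A} :
    a ∈ P.kernelPart ↔ ∃ c : G → D, (∀ g, P.σ g ≠ 1 → c g = 0) ∧ a = P.F c := by
  constructor
  · intro ha
    induction ha using Subring.closure_induction with
    | mem x hx =>
        obtain ⟨d, w, hw, rfl⟩ := hx
        refine ⟨fun h => if h = w then d else 0, fun g hg => ?_, (P.F_single d w).symm⟩
        simp only
        rw [if_neg]; rintro rfl; exact hg hw
    | zero => exact ⟨0, fun _ _ => rfl, P.F_zero.symm⟩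
    | one =>
        refine ⟨fun h => if h = 1 then 1 else 0, fun g hg => ?_, ?_⟩
        · simp only
          rw [if_neg]; rintro rfl; exact hg (map_one P.σ)
        · rw [P.F_single, map_one, one_mul, P.u_one]
    | add x y hx hy ihx ihy =>
        obtain ⟨c, hc, rfl⟩ := ihx; obtain ⟨c', hc', rfl⟩ := ihy
        exact ⟨c + c', fun g hg => by
          simp only [Pi.add_apply, hc g hg, hc' g hg, add_zero], (P.F_add c c').symm⟩
    | neg x hx ihx =>
        obtain ⟨c, hc, rfl⟩ := ihx
        exact ⟨-c, fun g hg => by simp [hc g hg], (P.F_neg c).symm⟩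
    | mul x y hx hy ihx ihy =>
        obtain ⟨c, hc, rfl⟩ := ihx; obtain ⟨c', hc', rfl⟩ := ihy
        refine ⟨fun h => ∑ g, c g * P.σ g (c' (g⁻¹ * h)) * P.α g (g⁻¹ * h), ?_, ?_⟩
        · intro h hh
          apply Finset.sum_eq_zero; intro g _
          by_cases hg : P.σ g = 1
          · have hgh : P.σ (g⁻¹ * h) ≠ 1 := by
              intro h1
              apply hh
              have h3 : P.σ h = P.σ g * P.σ (g⁻¹ * h) := by
                rw [← map_mul, mul_inv_cancel_left]
              rw [h3, hg, h1, mul_one]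
            rw [hc' _ hgh, map_zero, mul_zero, zero_mul]
          · rw [hc g hg, zero_mul, zero_mul]
        · have h1 : P.F c * P.F c' = ∑ g, (P.ι (c g) * P.u g) * P.F c' := by
            rw [F, Finset.sum_mul]
          rw [h1]
          simp only [P.gen_mul_F]
          rw [← P.F_sum Finset.univ
              (fun g h => c g * P.σ g (c' (g⁻¹ * h)) * P.α g (g⁻¹ * h))]
  · rintro ⟨c, hc, rfl⟩
    rw [F]
    apply Subring.sum_mem
    intro g _
    by_cases hg : P.σ g = 1
    · exact Subring.subset_closure ⟨c g, g, hg, rfl⟩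
    · rw [hc g hg, map_zero, zero_mul]
      exact Subring.zero_mem _

lemma exists_not_fixed {g : G} (hg : P.σ g ≠ 1) : ∃ r : D, P.σ g r ≠ r := by
  by_contra h
  push_neg at h
  exact hg (RingEquiv.ext h)

end CrysDom

/-- Let `D` be a Dedekind domain, `G` finite Abelian, `A = D ◊_{σ,α} G`,
`W = Ker σ` and `B = D ◊_{σ,α} W ⊆ A`.  Then `Z(A) ⊆ Z(B)` and
`Z(B) = Σ_{s ∈ W_reg} D u_s`, where
`W_reg = {s ∈ W : α(s,x) = α(x,s) for all x ∈ W}`. -/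
theorem center_of_kernel_part {G D A : Type*} [CommGroup G] [Fintype G]
    [CommRing D] [IsDomain D] [IsDedekindDomain D] [Ring A] (P : CrysDom G D A) :
    (∀ a ∈ Subring.center A, a ∈ P.kernelPart ∧
        ∀ b ∈ P.kernelPart, a * b = b * a) ∧
    {a : A | a ∈ P.kernelPart ∧ ∀ b ∈ P.kernelPart, a * b = b * a} =
      {a : A | ∃ c : G →₀ D,
        (∀ s ∈ c.support, P.σ s = 1 ∧ ∀ x : G, P.σ x = 1 → P.α s x = P.α x s) ∧
        a = c.sum fun s d => P.ι d * P.u s} := by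
  constructor
  · intro a ha
    refine ⟨?_, fun b _ => (Subring.mem_center_iff.mp ha b).symm⟩
    obtain ⟨c, rfl⟩ := P.F_surjective a
    rw [P.mem_kernelPart_iff]
    refine ⟨c, fun g hg => ?_, rfl⟩
    obtain ⟨r, hr⟩ := P.exists_not_fixed hg
    have h1 : P.F c * P.ι r = P.ι r * P.F c :=
      (Subring.mem_center_iff.mp ha (P.ι r)).symm
    rw [P.F_mul_iota, P.iota_mul_F] at h1
    have h2 := congrFun (P.F_injective h1) g
    have h3 : c g * (P.σ g r - r) = 0 := by rw [mul_sub, h2]; ring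
    rcases mul_eq_zero.mp h3 with h | h
    · exact h
    · exact absurd (sub_eq_zero.mp h) hr
  · ext a
    simp only [Set.mem_setOf_eq]
    constructor
    · rintro ⟨hmem, hcomm⟩
      obtain ⟨c, hc, rfl⟩ := P.mem_kernelPart_iff.mp hmem
      refine ⟨Finsupp.equivFunOnFinite.symm c, fun s hs => ?_, ?_⟩
      · have hcs : c s ≠ 0 := by
          have h0 := Finsupp.mem_support_iff.mp hs
          rwa [congrFun (CrysDom.coe_symm_eq c) s] at h0
        have hσs : P.σ s = 1 := by by_contra h; exact hcs (hc s h)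
        refine ⟨hσs, fun x hx => ?_⟩
        have hb : P.ι 1 * P.u x ∈ P.kernelPart :=
          Subring.subset_closure ⟨1, x, hx, rfl⟩
        have h1 := hcomm _ hb
        rw [P.F_mul_gen, P.gen_mul_F] at h1
        have h2 := congrFun (P.F_injective h1) (x * s)
        simp only [inv_mul_cancel_left, map_one, mul_one, one_mul,
          show x * s * x⁻¹ = s by rw [mul_comm x s, mul_inv_cancel_right]] at h2
        rw [hx, CrysDom.ringAut_one_apply] at h2
        exact mul_left_cancel₀ hcs h2
      · rw [P.finsuppSum_eq, CrysDom.coe_symm_eq]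
    · rintro ⟨c₀, hc₀, rfl⟩
      rw [P.finsuppSum_eq]
      have hW : ∀ g, P.σ g ≠ 1 → c₀ g = 0 := fun g hg => by
        by_contra h
        exact hg (hc₀ g (Finsupp.mem_support_iff.mpr h)).1
      refine ⟨P.mem_kernelPart_iff.mpr ⟨⇑c₀, hW, rfl⟩, ?_⟩
      intro b hb
      have hle : P.kernelPart ≤ Subring.centralizer {P.F ⇑c₀} := by
        refine Subring.closure_le.mpr ?_
        rintro _ ⟨d, x, hx, rfl⟩
        rw [SetLike.mem_coe, Subring.mem_centralizer_iff]
        rintro g hg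
        rw [Set.mem_singleton_iff] at hg; subst hg
        rw [P.F_mul_gen, P.gen_mul_F]
        congr 1
        funext h
        rw [mul_comm x⁻¹ h]
        by_cases hs : c₀ (h * x⁻¹) = 0
        · rw [hs]; simp
        · obtain ⟨hσs, hα⟩ := hc₀ _ (Finsupp.mem_support_iff.mpr hs)
          rw [hσs, CrysDom.ringAut_one_apply, hx, CrysDom.ringAut_one_apply, hα x hx]
          ring
      exact Subring.mem_centralizer_iff.mp (hle hb) _ rfl
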